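/- Let ε = 1 or ε = -1, let k ∈ ℝ and λ > 0. If u : ℝ × ℝ × (0,∞) → ℝ is smooth and satisfies ∂x(∂t u + u ∂x u + ∂x² u) + ε ∂y² u + (k/t²) y² ∂x² u = 0 for all x, y ∈ ℝ and t > 0, then the function v(x,y,t) := λ^{1/2} u(λ^{1/2} x, λ^{3/4} y, λ t) also satisfies this equation for all x, y ∈ ℝ and t > 0. (This is the finite form of the additional dilational symmetry D = t∂t + (1/2)x∂x + (3/4)y∂y − (1/2)u∂u present in Case 1, b₁ = 0, c₂ = k t^{-2}.) -/

import Mathlib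

/-- Partial derivative in the first (`x`) variable. -/
noncomputable def pdx (u : ℝ → ℝ → ℝ → ℝ) : ℝ → ℝ → ℝ → ℝ :=
  fun x y t => deriv (fun s => u s y t) x

/-- Partial derivative in the second (`y`) variable. -/
noncomputable def pdy (u : ℝ → ℝ → ℝ → ℝ) : ℝ → ℝ → ℝ → ℝ :=
  fun x y t => deriv (fun s => u x s t) y

/-- Partial derivative in the third (`t`) variable. -/
noncomputable def pdt (u : ℝ → ℝ → ℝ → ℝ) : ℝ → ℝ → ℝ → ℝ :=
  fun x y t => deriv (fun s => u x y s) t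

def S3 : Set (ℝ × ℝ × ℝ) := {p | 0 < p.2.2}

noncomputable def J (w : ℝ → ℝ → ℝ → ℝ) : ℝ × ℝ × ℝ → ℝ := fun p => w p.1 p.2.1 p.2.2

lemma isOpen_S3 : IsOpen S3 :=
  isOpen_lt continuous_const (continuous_snd.comp continuous_snd)

lemma hasDerivAt_slice_x (W : ℝ × ℝ × ℝ → ℝ) (hW : ContDiffOn ℝ (⊤ : ℕ∞) W S3)
    {x y t : ℝ} (ht : 0 < t) :
    HasDerivAt (fun s => W (s, y, t)) (fderiv ℝ W (x, y, t) (1, 0, 0)) x := by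
  have hd : DifferentiableAt ℝ W (x, y, t) :=
    (hW.differentiableOn (by simp)).differentiableAt (isOpen_S3.mem_nhds ht)
  have hline : HasDerivAt (fun s : ℝ => ((s, y, t) : ℝ × ℝ × ℝ)) (1, 0, 0) x :=
    (hasDerivAt_id x).prodMk ((hasDerivAt_const x y).prodMk (hasDerivAt_const x t))
  exact hd.hasFDerivAt.comp_hasDerivAt x hline

lemma hasDerivAt_slice_y (W : ℝ × ℝ × ℝ → ℝ) (hW : ContDiffOn ℝ (⊤ : ℕ∞) W S3)
    {x y t : ℝ} (ht : 0 < t) :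
    HasDerivAt (fun s => W (x, s, t)) (fderiv ℝ W (x, y, t) (0, 1, 0)) y := by
  have hd : DifferentiableAt ℝ W (x, y, t) :=
    (hW.differentiableOn (by simp)).differentiableAt (isOpen_S3.mem_nhds ht)
  have hline : HasDerivAt (fun s : ℝ => ((x, s, t) : ℝ × ℝ × ℝ)) (0, 1, 0) y :=
    (hasDerivAt_const y x).prodMk ((hasDerivAt_id y).prodMk (hasDerivAt_const y t))
  exact hd.hasFDerivAt.comp_hasDerivAt y hline

lemma hasDerivAt_slice_t (W : ℝ × ℝ × ℝ → ℝ) (hW : ContDiffOn ℝ (⊤ : ℕ∞) W S3)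
    {x y t : ℝ} (ht : 0 < t) :
    HasDerivAt (fun s => W (x, y, s)) (fderiv ℝ W (x, y, t) (0, 0, 1)) t := by
  have hd : DifferentiableAt ℝ W (x, y, t) :=
    (hW.differentiableOn (by simp)).differentiableAt (isOpen_S3.mem_nhds ht)
  have hline : HasDerivAt (fun s : ℝ => ((x, y, s) : ℝ × ℝ × ℝ)) (0, 0, 1) t :=
    (hasDerivAt_const t x).prodMk ((hasDerivAt_const t y).prodMk (hasDerivAt_id t))
  exact hd.hasFDerivAt.comp_hasDerivAt t hline

lemma hasDerivAt_pdx (w : ℝ → ℝ → ℝ → ℝ) (hw : ContDiffOn ℝ (⊤ : ℕ∞) (J w) S3)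
    (x y t : ℝ) (ht : 0 < t) :
    HasDerivAt (fun s => w s y t) (pdx w x y t) x := by
  have h := hasDerivAt_slice_x (J w) hw (x := x) (y := y) (t := t) ht
  have h2 : pdx w x y t = fderiv ℝ (J w) (x, y, t) (1, 0, 0) := h.deriv
  rw [h2]; exact h

lemma hasDerivAt_pdy (w : ℝ → ℝ → ℝ → ℝ) (hw : ContDiffOn ℝ (⊤ : ℕ∞) (J w) S3)
    (x y t : ℝ) (ht : 0 < t) :
    HasDerivAt (fun s => w x s t) (pdy w x y t) y := by
  have h := hasDerivAt_slice_y (J w) hw (x := x) (y := y) (t := t) ht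
  have h2 : pdy w x y t = fderiv ℝ (J w) (x, y, t) (0, 1, 0) := h.deriv
  rw [h2]; exact h

lemma hasDerivAt_pdt (w : ℝ → ℝ → ℝ → ℝ) (hw : ContDiffOn ℝ (⊤ : ℕ∞) (J w) S3)
    (x y t : ℝ) (ht : 0 < t) :
    HasDerivAt (fun s => w x y s) (pdt w x y t) t := by
  have h := hasDerivAt_slice_t (J w) hw (x := x) (y := y) (t := t) ht
  have h2 : pdt w x y t = fderiv ℝ (J w) (x, y, t) (0, 0, 1) := h.deriv
  rw [h2]; exact h

lemma contDiffOn_fderiv_apply (W : ℝ × ℝ × ℝ → ℝ) (hW : ContDiffOn ℝ (⊤ : ℕ∞) W S3)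
    (v : ℝ × ℝ × ℝ) :
    ContDiffOn ℝ (⊤ : ℕ∞) (fun p => fderiv ℝ W p v) S3 := by
  have h1 : ContDiffOn ℝ (⊤ : ℕ∞) (fun p => fderiv ℝ W p) S3 :=
    hW.fderiv_of_isOpen isOpen_S3 (by exact_mod_cast le_top)
  exact (ContinuousLinearMap.apply ℝ ℝ v).contDiff.comp_contDiffOn h1

lemma contDiffOn_J_pdx (w : ℝ → ℝ → ℝ → ℝ) (hw : ContDiffOn ℝ (⊤ : ℕ∞) (J w) S3) :
    ContDiffOn ℝ (⊤ : ℕ∞) (J (pdx w)) S3 := by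
  refine (contDiffOn_fderiv_apply (J w) hw (1, 0, 0)).congr fun p hp => ?_
  obtain ⟨p1, p2, p3⟩ := p
  exact (hasDerivAt_slice_x (J w) hw (x := p1) (y := p2) (t := p3) hp).deriv

lemma contDiffOn_J_pdy (w : ℝ → ℝ → ℝ → ℝ) (hw : ContDiffOn ℝ (⊤ : ℕ∞) (J w) S3) :
    ContDiffOn ℝ (⊤ : ℕ∞) (J (pdy w)) S3 := by
  refine (contDiffOn_fderiv_apply (J w) hw (0, 1, 0)).congr fun p hp => ?_
  obtain ⟨p1, p2, p3⟩ := p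
  exact (hasDerivAt_slice_y (J w) hw (x := p1) (y := p2) (t := p3) hp).deriv

lemma contDiffOn_J_pdt (w : ℝ → ℝ → ℝ → ℝ) (hw : ContDiffOn ℝ (⊤ : ℕ∞) (J w) S3) :
    ContDiffOn ℝ (⊤ : ℕ∞) (J (pdt w)) S3 := by
  refine (contDiffOn_fderiv_apply (J w) hw (0, 0, 1)).congr fun p hp => ?_
  obtain ⟨p1, p2, p3⟩ := p
  exact (hasDerivAt_slice_t (J w) hw (x := p1) (y := p2) (t := p3) hp).deriv

lemma pdx_scale (w : ℝ → ℝ → ℝ → ℝ) (hw : ContDiffOn ℝ (⊤ : ℕ∞) (J w) S3)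
    (c aa bb l x y t : ℝ) (hlt : 0 < l * t) :
    pdx (fun x y t => c * w (aa * x) (bb * y) (l * t)) x y t
      = c * aa * pdx w (aa * x) (bb * y) (l * t) := by
  have hg : HasDerivAt (fun s => w s (bb * y) (l * t)) (pdx w (aa * x) (bb * y) (l * t)) (aa * x) :=
    hasDerivAt_pdx w hw _ _ _ hlt
  have hin : HasDerivAt (fun s : ℝ => aa * s) aa x := by
    simpa using (hasDerivAt_id x).const_mul aa
  have h := ((hg.comp x hin).const_mul c).deriv
  show deriv (fun s => c * w (aa * s) (bb * y) (l * t)) x = _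
  rw [show (fun s => c * w (aa * s) (bb * y) (l * t))
      = fun s => c * ((fun s => w s (bb * y) (l * t)) ∘ fun s : ℝ => aa * s) s from rfl]
  rw [h]; ring

lemma pdy_scale (w : ℝ → ℝ → ℝ → ℝ) (hw : ContDiffOn ℝ (⊤ : ℕ∞) (J w) S3)
    (c aa bb l x y t : ℝ) (hlt : 0 < l * t) :
    pdy (fun x y t => c * w (aa * x) (bb * y) (l * t)) x y t
      = c * bb * pdy w (aa * x) (bb * y) (l * t) := by
  have hg : HasDerivAt (fun s => w (aa * x) s (l * t)) (pdy w (aa * x) (bb * y) (l * t)) (bb * y) :=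
    hasDerivAt_pdy w hw _ _ _ hlt
  have hin : HasDerivAt (fun s : ℝ => bb * s) bb y := by
    simpa using (hasDerivAt_id y).const_mul bb
  have h := ((hg.comp y hin).const_mul c).deriv
  show deriv (fun s => c * w (aa * x) (bb * s) (l * t)) y = _
  rw [show (fun s => c * w (aa * x) (bb * s) (l * t))
      = fun s => c * ((fun s => w (aa * x) s (l * t)) ∘ fun s : ℝ => bb * s) s from rfl]
  rw [h]; ring

lemma pdt_scale (w : ℝ → ℝ → ℝ → ℝ) (hw : ContDiffOn ℝ (⊤ : ℕ∞) (J w) S3)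
    (c aa bb l x y t : ℝ) (hlt : 0 < l * t) :
    pdt (fun x y t => c * w (aa * x) (bb * y) (l * t)) x y t
      = c * l * pdt w (aa * x) (bb * y) (l * t) := by
  have hg : HasDerivAt (fun s => w (aa * x) (bb * y) s) (pdt w (aa * x) (bb * y) (l * t)) (l * t) :=
    hasDerivAt_pdt w hw _ _ _ hlt
  have hin : HasDerivAt (fun s : ℝ => l * s) l t := by
    simpa using (hasDerivAt_id t).const_mul l
  have h := ((hg.comp t hin).const_mul c).deriv
  show deriv (fun s => c * w (aa * x) (bb * y) (l * s)) t = _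
  rw [show (fun s => c * w (aa * x) (bb * y) (l * s))
      = fun s => c * ((fun s => w (aa * x) (bb * y) s) ∘ fun s : ℝ => l * s) s from rfl]
  rw [h]; ring

lemma pdx_congr {f g : ℝ → ℝ → ℝ → ℝ} (h : ∀ x y t : ℝ, 0 < t → f x y t = g x y t)
    {x y t : ℝ} (ht : 0 < t) : pdx f x y t = pdx g x y t := by
  unfold pdx
  congr 1
  funext s
  exact h s y t ht

lemma pdy_congr {f g : ℝ → ℝ → ℝ → ℝ} (h : ∀ x y t : ℝ, 0 < t → f x y t = g x y t)
    {x y t : ℝ} (ht : 0 < t) : pdy f x y t = pdy g x y t := by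
  unfold pdy
  congr 1
  funext s
  exact h x s t ht

theorem stmt11 (ε : ℝ) (hε : ε = 1 ∨ ε = -1) (k : ℝ) (lam : ℝ) (hlam : 0 < lam)
    (u : ℝ → ℝ → ℝ → ℝ)
    (hu : ContDiffOn ℝ (⊤ : ℕ∞) (fun p : ℝ × ℝ × ℝ => u p.1 p.2.1 p.2.2)
      {p : ℝ × ℝ × ℝ | 0 < p.2.2})
    (heq : ∀ x y t : ℝ, 0 < t →
      pdx (fun x y t => pdt u x y t + u x y t * pdx u x y t + pdx (pdx u) x y t) x y t
        + ε * pdy (pdy u) x y t + k / t ^ 2 * y ^ 2 * pdx (pdx u) x y t = 0) :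
    ∀ x y t : ℝ, 0 < t →
      (fun v : ℝ → ℝ → ℝ → ℝ =>
        pdx (fun x y t => pdt v x y t + v x y t * pdx v x y t + pdx (pdx v) x y t) x y t
          + ε * pdy (pdy v) x y t + k / t ^ 2 * y ^ 2 * pdx (pdx v) x y t = 0)
      (fun x y t => lam ^ ((1 : ℝ) / 2) *
        u (lam ^ ((1 : ℝ) / 2) * x) (lam ^ ((3 : ℝ) / 4) * y) (lam * t)) := by
  intro x y t ht
  set a : ℝ := lam ^ ((1 : ℝ) / 2) with ha_def
  set b : ℝ := lam ^ ((3 : ℝ) / 4) with hb_def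
  have ha : 0 < a := Real.rpow_pos_of_pos hlam _
  have hb : 0 < b := Real.rpow_pos_of_pos hlam _
  have haa : a * a = lam := by
    rw [ha_def, ← Real.rpow_add hlam]; norm_num
  have hbb : b * b = lam * a := by
    rw [hb_def, ha_def, ← Real.rpow_add hlam,
      show (3:ℝ)/4 + 3/4 = 1 + 1/2 by norm_num, Real.rpow_add hlam, Real.rpow_one]
  have hu' : ContDiffOn ℝ (⊤ : ℕ∞) (J u) S3 := hu
  have hx1 := contDiffOn_J_pdx u hu'
  have hy1 := contDiffOn_J_pdy u hu'
  have ht1 := contDiffOn_J_pdt u hu'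
  have hx2 := contDiffOn_J_pdx (pdx u) hx1
  set P : ℝ → ℝ → ℝ → ℝ :=
    fun x y t => pdt u x y t + u x y t * pdx u x y t + pdx (pdx u) x y t with hP_def
  have hP : ContDiffOn ℝ (⊤ : ℕ∞) (J P) S3 := (ht1.add (hu'.mul hx1)).add hx2
  set v : ℝ → ℝ → ℝ → ℝ := fun x y t => a * u (a * x) (b * y) (lam * t) with hv_def
  show pdx (fun x y t => pdt v x y t + v x y t * pdx v x y t + pdx (pdx v) x y t) x y t
      + ε * pdy (pdy v) x y t + k / t ^ 2 * y ^ 2 * pdx (pdx v) x y t = 0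
  have hvx : ∀ x y t : ℝ, 0 < t →
      pdx v x y t = a * a * pdx u (a * x) (b * y) (lam * t) := fun x y t ht =>
    pdx_scale u hu' a a b lam x y t (mul_pos hlam ht)
  have hvy : ∀ x y t : ℝ, 0 < t →
      pdy v x y t = a * b * pdy u (a * x) (b * y) (lam * t) := fun x y t ht =>
    pdy_scale u hu' a a b lam x y t (mul_pos hlam ht)
  have hvt : ∀ x y t : ℝ, 0 < t →
      pdt v x y t = a * lam * pdt u (a * x) (b * y) (lam * t) := fun x y t ht =>
    pdt_scale u hu' a a b lam x y t (mul_pos hlam ht)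
  have hvxx : ∀ x y t : ℝ, 0 < t →
      pdx (pdx v) x y t = a * a * a * pdx (pdx u) (a * x) (b * y) (lam * t) := by
    intro x y t ht
    rw [pdx_congr hvx ht, pdx_scale (pdx u) hx1 (a * a) a b lam x y t (mul_pos hlam ht)]
  have hvyy : pdy (pdy v) x y t = a * b * b * pdy (pdy u) (a * x) (b * y) (lam * t) := by
    rw [pdy_congr hvy ht, pdy_scale (pdy u) hy1 (a * b) a b lam x y t (mul_pos hlam ht)]
  have hsum : ∀ x y t : ℝ, 0 < t →
      pdt v x y t + v x y t * pdx v x y t + pdx (pdx v) x y t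
        = a * lam * P (a * x) (b * y) (lam * t) := by
    intro x y t ht
    rw [hvt x y t ht, hvx x y t ht, hvxx x y t ht, hP_def]
    simp only [hv_def]
    linear_combination (a * u (a * x) (b * y) (lam * t) * pdx u (a * x) (b * y) (lam * t)
      + a * pdx (pdx u) (a * x) (b * y) (lam * t)) * haa
  have hbig : pdx (fun x y t => pdt v x y t + v x y t * pdx v x y t + pdx (pdx v) x y t) x y t
      = a * lam * a * pdx P (a * x) (b * y) (lam * t) := by
    rw [pdx_congr hsum ht, pdx_scale P hP (a * lam) a b lam x y t (mul_pos hlam ht)]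
  have h0 := heq (a * x) (b * y) (lam * t) (mul_pos hlam ht)
  rw [hbig, hvyy, hvxx x y t ht]
  have htne : t ≠ 0 := ne_of_gt ht
  have hlne : lam ≠ 0 := ne_of_gt hlam
  set A := pdx P (a * x) (b * y) (lam * t) with hA
  set B := pdy (pdy u) (a * x) (b * y) (lam * t) with hB
  set C := pdx (pdx u) (a * x) (b * y) (lam * t) with hC
  field_simp at h0 ⊢
  linear_combination h0 + (lam * t ^ 2 * A + lam * t ^ 2 * ε * B + k * y ^ 2 * a * C) * haa
    + (t ^ 2 * ε * a * B - k * y ^ 2 * C) * hbb
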